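/- If V_m, V̄ ∈ ℝ^{q×d} are column-orthonormal and ‖V_m − V̄ (V̄ᵀ V_m)‖ → 0, then min over orthogonal Q ∈ O(d) of ‖V̄ᵀ V_m − Q‖ → 0, and consequently min over V̄' with Range(V̄') = Range(V̄) column-orthonormal of ‖V_m − V̄'‖ → 0. -/

import Mathlib

open Matrix Filter

noncomputable def frobNorm {p q : ℕ} (M : Matrix (Fin p) (Fin q) ℝ) : ℝ :=
  Real.sqrt (∑ i, ∑ j, (M i j) ^ 2)

lemma frobNorm_nonneg {p q : ℕ} (M : Matrix (Fin p) (Fin q) ℝ) : 0 ≤ frobNorm M :=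
  Real.sqrt_nonneg _

lemma frobNorm_zero {p q : ℕ} : frobNorm (0 : Matrix (Fin p) (Fin q) ℝ) = 0 := by
  simp [frobNorm]

lemma frobNorm_continuous {p q : ℕ} :
    Continuous (fun M : Matrix (Fin p) (Fin q) ℝ => frobNorm M) := by
  apply Real.continuous_sqrt.comp
  apply continuous_finset_sum
  intro i _
  apply continuous_finset_sum
  intro j _
  exact ((continuous_apply j).comp (continuous_apply i)).pow 2

lemma abs_entry_le_frobNorm {p q : ℕ} (M : Matrix (Fin p) (Fin q) ℝ) (i : Fin p) (j : Fin q) :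
    |M i j| ≤ frobNorm M := by
  rw [← Real.sqrt_sq_eq_abs]
  apply Real.sqrt_le_sqrt
  calc M i j ^ 2 ≤ ∑ j', (M i j') ^ 2 :=
        Finset.single_le_sum (f := fun j' => (M i j') ^ 2) (fun j' _ => sq_nonneg _) (Finset.mem_univ j)
    _ ≤ ∑ i', ∑ j', (M i' j') ^ 2 :=
        Finset.single_le_sum (f := fun i' => ∑ j', (M i' j') ^ 2) (fun i' _ => Finset.sum_nonneg fun j' _ => sq_nonneg _)
          (Finset.mem_univ i)

theorem orthonormal_representative_convergence {q d : ℕ}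
    (V : ℕ → Matrix (Fin q) (Fin d) ℝ) (Vbar : Matrix (Fin q) (Fin d) ℝ)
    (hVorth : ∀ m, (V m)ᵀ * (V m) = 1)
    (hVbarOrth : Vbarᵀ * Vbar = 1)
    (h : Tendsto (fun m => frobNorm (V m - Vbar * (Vbarᵀ * V m))) atTop (nhds 0)) :
    Tendsto (fun m => sInf { x : ℝ | ∃ Q : Matrix (Fin d) (Fin d) ℝ,
        Qᵀ * Q = 1 ∧ x = frobNorm (Vbarᵀ * V m - Q) }) atTop (nhds 0) ∧
    Tendsto (fun m => sInf { x : ℝ | ∃ V' : Matrix (Fin q) (Fin d) ℝ,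
        V'ᵀ * V' = 1 ∧
        (∀ v : Fin q → ℝ, (∃ c, v = V'.mulVec c) ↔ ∃ c, v = Vbar.mulVec c) ∧
        x = frobNorm (V m - V') }) atTop (nhds 0) := by
  set A : ℕ → Matrix (Fin d) (Fin d) ℝ := fun m => Vbarᵀ * V m with hA
  set E : ℕ → Matrix (Fin q) (Fin d) ℝ := fun m => V m - Vbar * (Vbarᵀ * V m) with hEdef
  -- E m → 0 entrywise
  have hEtendsto : Tendsto E atTop (nhds 0) := by
    apply tendsto_pi_nhds.mpr
    intro i
    rw [tendsto_pi_nhds]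
    intro j
    have : ((0 : Matrix (Fin q) (Fin d) ℝ) i j) = 0 := rfl
    rw [this]
    exact squeeze_zero_norm (fun m => abs_entry_le_frobNorm (E m) i j) h
  -- V m = E m + Vbar * A m
  have hVE : ∀ m, V m = E m + Vbar * A m := by
    intro m; simp [hEdef, hA]
  -- entries of A are bounded by 1
  have habs : ∀ m i j, |A m i j| ≤ 1 := by
    intro m i j
    have hv1 : ∑ k, Vbar k i ^ 2 = 1 := by
      have := congrFun (congrFun hVbarOrth i) i
      simpa [Matrix.mul_apply, Matrix.one_apply, pow_two] using this
    have hv2 : ∑ k, V m k j ^ 2 = 1 := by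
      have := congrFun (congrFun (hVorth m) j) j
      simpa [Matrix.mul_apply, Matrix.one_apply, pow_two] using this
    have hAij : A m i j = ∑ k, Vbar k i * V m k j := by
      simp [hA, Matrix.mul_apply, Matrix.transpose_apply]
    have hcs := Finset.sum_mul_sq_le_sq_mul_sq Finset.univ (fun k => Vbar k i)
      (fun k => V m k j)
    rw [hv1, hv2, one_mul] at hcs
    rw [← sq_le_one_iff_abs_le_one, hAij]
    exact hcs
  -- compact set containing A m
  have hK : IsCompact {M : Matrix (Fin d) (Fin d) ℝ |
      M ∈ Set.univ.pi fun _ : Fin d => Set.univ.pi fun _ : Fin d => Set.Icc (-1 : ℝ) 1} := by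
    exact isCompact_univ_pi fun i => isCompact_univ_pi fun j => isCompact_Icc
  have hAmem : ∀ m, A m ∈ {M : Matrix (Fin d) (Fin d) ℝ |
      M ∈ Set.univ.pi fun _ : Fin d => Set.univ.pi fun _ : Fin d => Set.Icc (-1 : ℝ) 1} := by
    intro m
    rw [Set.mem_setOf_eq]; refine Set.mem_univ_pi.mpr ?_
    intro i
    rw [Set.mem_univ_pi]
    intro j
    exact Set.mem_Icc.mpr (abs_le.mp (habs m i j))
  -- key subsequence extraction
  have key : ∀ ns : ℕ → ℕ, Tendsto ns atTop atTop →
      ∃ Astar : Matrix (Fin d) (Fin d) ℝ, Astarᵀ * Astar = 1 ∧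
        ∃ ms : ℕ → ℕ,
          Tendsto (fun n => A (ns (ms n))) atTop (nhds Astar) ∧
          Tendsto (fun n => V (ns (ms n))) atTop (nhds (Vbar * Astar)) := by
    intro ns hns
    haveI : FirstCountableTopology (Matrix (Fin d) (Fin d) ℝ) :=
      inferInstanceAs (FirstCountableTopology (Fin d → Fin d → ℝ))
    obtain ⟨Astar, _, φ, hφ, hconv⟩ := hK.tendsto_subseq (fun n => hAmem (ns n))
    refine ⟨Astar, ?_, φ, hconv, ?_⟩
    · -- V (ns (φ n)) → Vbar * Astar and (V)ᵀV = 1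
      have hVconv : Tendsto (fun n => V (ns (φ n))) atTop (nhds (Vbar * Astar)) := by
        have hE' : Tendsto (fun n => E (ns (φ n))) atTop (nhds 0) :=
          hEtendsto.comp (hns.comp hφ.tendsto_atTop)
        have hmul : Tendsto (fun n => Vbar * A (ns (φ n))) atTop (nhds (Vbar * Astar)) := by
          have hcont : Continuous fun M : Matrix (Fin d) (Fin d) ℝ => Vbar * M :=
            continuous_const.matrix_mul continuous_id
        -- compose
          exact (hcont.tendsto Astar).comp hconv
        have := hE'.add hmul
        rw [zero_add] at this
        convert this using 1
        funext n
        exact hVE (ns (φ n))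
      have hcontT : Continuous fun M : Matrix (Fin q) (Fin d) ℝ => Mᵀ * M :=
        (continuous_id.matrix_transpose).matrix_mul continuous_id
      have h1 : Tendsto (fun n => (V (ns (φ n)))ᵀ * V (ns (φ n))) atTop
          (nhds ((Vbar * Astar)ᵀ * (Vbar * Astar))) := (hcontT.tendsto _).comp hVconv
      have h2 : Tendsto (fun n => (V (ns (φ n)))ᵀ * V (ns (φ n))) atTop
          (nhds (1 : Matrix (Fin d) (Fin d) ℝ)) := by
        simp only [hVorth]; exact tendsto_const_nhds
      have heq : (Vbar * Astar)ᵀ * (Vbar * Astar) = 1 := tendsto_nhds_unique h1 h2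
      calc Astarᵀ * Astar = Astarᵀ * 1 * Astar := by rw [mul_one]
        _ = Astarᵀ * (Vbarᵀ * Vbar) * Astar := by rw [hVbarOrth]
        _ = (Vbar * Astar)ᵀ * (Vbar * Astar) := by
            rw [Matrix.transpose_mul]; rw [Matrix.mul_assoc, Matrix.mul_assoc, Matrix.mul_assoc]
        _ = 1 := heq
    · -- same V convergence (repeat)
      have hE' : Tendsto (fun n => E (ns (φ n))) atTop (nhds 0) :=
        hEtendsto.comp (hns.comp hφ.tendsto_atTop)
      have hcont : Continuous fun M : Matrix (Fin d) (Fin d) ℝ => Vbar * M :=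
        continuous_const.matrix_mul continuous_id
      have hmul : Tendsto (fun n => Vbar * A (ns (φ n))) atTop (nhds (Vbar * Astar)) :=
        (hcont.tendsto Astar).comp hconv
      have := hE'.add hmul
      rw [zero_add] at this
      convert this using 1
      funext n
      exact hVE (ns (φ n))
  constructor
  · -- part 1
    apply tendsto_of_subseq_tendsto
    intro ns hns
    obtain ⟨Astar, hAstar, ms, hAconv, _⟩ := key ns hns
    refine ⟨ms, ?_⟩
    have hub : ∀ n, sInf { x : ℝ | ∃ Q : Matrix (Fin d) (Fin d) ℝ,
        Qᵀ * Q = 1 ∧ x = frobNorm (Vbarᵀ * V (ns (ms n)) - Q) } ≤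
        frobNorm (A (ns (ms n)) - Astar) := by
      intro n
      apply csInf_le
      · exact ⟨0, fun x hx => by obtain ⟨Q, _, rfl⟩ := hx; exact frobNorm_nonneg _⟩
      · exact ⟨Astar, hAstar, rfl⟩
    have hlb : ∀ n, 0 ≤ sInf { x : ℝ | ∃ Q : Matrix (Fin d) (Fin d) ℝ,
        Qᵀ * Q = 1 ∧ x = frobNorm (Vbarᵀ * V (ns (ms n)) - Q) } := by
      intro n
      apply Real.sInf_nonneg
      rintro x ⟨Q, _, rfl⟩
      exact frobNorm_nonneg _
    have hgoal : Tendsto (fun n => frobNorm (A (ns (ms n)) - Astar)) atTop (nhds 0) := by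
      have : Tendsto (fun n => A (ns (ms n)) - Astar) atTop (nhds 0) := by
        simpa using hAconv.sub (tendsto_const_nhds (x := Astar))
      have := (frobNorm_continuous.tendsto 0).comp this
      simpa [frobNorm_zero, Function.comp_def] using this
    exact squeeze_zero hlb hub hgoal
  · -- part 2
    apply tendsto_of_subseq_tendsto
    intro ns hns
    obtain ⟨Astar, hAstar, ms, _, hVconv⟩ := key ns hns
    refine ⟨ms, ?_⟩
    have hmemV' : (Vbar * Astar)ᵀ * (Vbar * Astar) = 1 := by
      calc (Vbar * Astar)ᵀ * (Vbar * Astar)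
          = Astarᵀ * (Vbarᵀ * Vbar) * Astar := by
            rw [Matrix.transpose_mul, Matrix.mul_assoc, Matrix.mul_assoc, Matrix.mul_assoc]
        _ = Astarᵀ * Astar := by rw [hVbarOrth, mul_one]
        _ = 1 := hAstar
    have hrange : ∀ v : Fin q → ℝ,
        (∃ c, v = (Vbar * Astar).mulVec c) ↔ ∃ c, v = Vbar.mulVec c := by
      intro v
      constructor
      · rintro ⟨c, rfl⟩
        exact ⟨Astar.mulVec c, by rw [← Matrix.mulVec_mulVec]⟩
      · rintro ⟨c, rfl⟩
        refine ⟨Astarᵀ.mulVec c, ?_⟩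
        rw [Matrix.mulVec_mulVec, Matrix.mul_assoc, mul_eq_one_comm.mp hAstar, Matrix.mul_one]
    have hub : ∀ n, sInf { x : ℝ | ∃ V' : Matrix (Fin q) (Fin d) ℝ,
        V'ᵀ * V' = 1 ∧
        (∀ v : Fin q → ℝ, (∃ c, v = V'.mulVec c) ↔ ∃ c, v = Vbar.mulVec c) ∧
        x = frobNorm (V (ns (ms n)) - V') } ≤
        frobNorm (V (ns (ms n)) - Vbar * Astar) := by
      intro n
      apply csInf_le
      · exact ⟨0, fun x hx => by obtain ⟨V', _, _, rfl⟩ := hx; exact frobNorm_nonneg _⟩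
      · exact ⟨Vbar * Astar, hmemV', hrange, rfl⟩
    have hlb : ∀ n, 0 ≤ sInf { x : ℝ | ∃ V' : Matrix (Fin q) (Fin d) ℝ,
        V'ᵀ * V' = 1 ∧
        (∀ v : Fin q → ℝ, (∃ c, v = V'.mulVec c) ↔ ∃ c, v = Vbar.mulVec c) ∧
        x = frobNorm (V (ns (ms n)) - V') } := by
      intro n
      apply Real.sInf_nonneg
      rintro x ⟨V', _, _, rfl⟩
      exact frobNorm_nonneg _
    have hgoal : Tendsto (fun n => frobNorm (V (ns (ms n)) - Vbar * Astar)) atTop (nhds 0) := by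
      have : Tendsto (fun n => V (ns (ms n)) - Vbar * Astar) atTop (nhds 0) := by
        simpa using hVconv.sub (tendsto_const_nhds (x := Vbar * Astar))
      have := (frobNorm_continuous.tendsto 0).comp this
      simpa [frobNorm_zero, Function.comp_def] using this
    exact squeeze_zero hlb hub hgoal
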